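/- arXiv:1605.03647 — 2 statements merged into one kernel-verified Lean document; each statement's English description precedes it below -/
import Mathlib

section
/- Let U = [U₁, U₂] ∈ ℝ^{M×M} be an orthogonal matrix with L̄·U₁ = 0 and U₂ = Eᵀ·V₂·Γ^{−1/2}, and let F = diag(0, Γ) ∈ ℝ^{M×M} (zero block of size M−N+1). Then U·F·Uᵀ = L_e, i.e., F = Uᵀ·L_e·U. -/
open Matrix

/-- For the orthogonal matrix `U = [U₁, U₂]` with `L̄·U₁ = 0` and
`U₂ = Eᵀ·V₂·Γ^{−1/2}`, and `F = diag(0, Γ)`, one has `U·F·Uᵀ = L_e` and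
`F = Uᵀ·L_e·U`. -/
theorem UFUt_eq_Le
    (N M : ℕ) (E : Matrix (Fin N) (Fin M) ℝ)
    (hInc : ∀ j : Fin M, ∃ a b : Fin N, a ≠ b ∧ E a j = 1 ∧ E b j = -1 ∧
      ∀ i : Fin N, i ≠ a → i ≠ b → E i j = 0)
    (hConn : ∀ v : Fin N → ℝ, Eᵀ *ᵥ v = 0 → ∃ c : ℝ, ∀ i, v i = c)
    (Ld : Matrix (Fin N) (Fin N) ℝ)
    (hp1 : (E * Eᵀ) * Ld * (E * Eᵀ) = E * Eᵀ)
    (hp2 : Ld * (E * Eᵀ) * Ld = Ld)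
    (hp3 : ((E * Eᵀ) * Ld)ᵀ = (E * Eᵀ) * Ld)
    (hp4 : (Ld * (E * Eᵀ))ᵀ = Ld * (E * Eᵀ))
    (γ : Fin (N - 1) → ℝ) (hγ : ∀ k, 0 < γ k)
    (V₂ : Matrix (Fin N) (Fin (N - 1)) ℝ)
    (hV₂ : V₂ᵀ * V₂ = 1)
    (hLV₂ : (E * Eᵀ) * V₂ = V₂ * Matrix.diagonal γ)
    (S : Matrix (Fin (N - 1)) (Fin (N - 1)) ℝ)
    (hS : S = Matrix.diagonal fun k => (Real.sqrt (γ k))⁻¹)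
    (U₁ : Matrix (Fin M) (Fin (M - N + 1)) ℝ)
    (hU₁ : (Eᵀ * Ld * E) * U₁ = 0)
    (U : Matrix (Fin M) (Fin (M - N + 1) ⊕ Fin (N - 1)) ℝ)
    (hU : U = Matrix.fromCols U₁ (Eᵀ * V₂ * S))
    -- U is an orthogonal matrix
    (hUorth : Uᵀ * U = 1) (hUorth' : U * Uᵀ = 1)
    (F : Matrix (Fin (M - N + 1) ⊕ Fin (N - 1)) (Fin (M - N + 1) ⊕ Fin (N - 1)) ℝ)
    (hF : F = Matrix.fromBlocks 0 0 0 (Matrix.diagonal γ)) :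
    U * F * Uᵀ = Eᵀ * E ∧ F = Uᵀ * (Eᵀ * E) * U := by
  set Γ : Matrix (Fin (N - 1)) (Fin (N - 1)) ℝ := Matrix.diagonal γ with hΓ
  have hLsym : (E * Eᵀ)ᵀ = E * Eᵀ := by rw [transpose_mul, transpose_transpose]
  -- right-associated versions
  have hp1r : E * (Eᵀ * (Ld * (E * Eᵀ))) = E * Eᵀ := by
    simpa only [Matrix.mul_assoc] using hp1
  have hp1t : E * (Eᵀ * (Ldᵀ * (E * Eᵀ))) = E * Eᵀ := by
    have h := congrArg transpose hp1
    simp only [transpose_mul, transpose_transpose] at h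
    simpa only [Matrix.mul_assoc] using h
  have hLV₂r : E * (Eᵀ * V₂) = V₂ * Γ := by
    simpa only [Matrix.mul_assoc, hΓ] using hLV₂
  -- key: E = L · L† · E
  have key : E * (Eᵀ * (Ld * E)) = E := by
    have h4 : (E - E * (Eᵀ * (Ld * E))) * (E - E * (Eᵀ * (Ld * E)))ᵀ = 0 := by
      have ht : (E - E * (Eᵀ * (Ld * E)))ᵀ = Eᵀ - Eᵀ * (Ldᵀ * (E * Eᵀ)) := by
        simp only [transpose_sub, transpose_mul, transpose_transpose, Matrix.mul_assoc]
      rw [ht, Matrix.sub_mul, Matrix.mul_sub, Matrix.mul_sub]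
      have t1 : E * (Eᵀ * (Ldᵀ * (E * Eᵀ))) = E * Eᵀ := hp1t
      have t2 : E * (Eᵀ * (Ld * E)) * Eᵀ = E * Eᵀ := by
        rw [Matrix.mul_assoc, Matrix.mul_assoc, Matrix.mul_assoc]; exact hp1r
      have t3 : E * (Eᵀ * (Ld * E)) * (Eᵀ * (Ldᵀ * (E * Eᵀ))) = E * Eᵀ := by
        calc E * (Eᵀ * (Ld * E)) * (Eᵀ * (Ldᵀ * (E * Eᵀ)))
            = E * (Eᵀ * (Ld * (E * (Eᵀ * (Ldᵀ * (E * Eᵀ)))))) := by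
              simp only [Matrix.mul_assoc]
          _ = E * (Eᵀ * (Ld * (E * Eᵀ))) := by rw [hp1t]
          _ = E * Eᵀ := hp1r
      rw [t1, t2, t3]
      abel
    have h5 : E - E * (Eᵀ * (Ld * E)) = 0 := by
      have := Matrix.self_mul_conjTranspose_eq_zero
        (A := E - E * (Eᵀ * (Ld * E))).mp
      apply this
      rw [conjTranspose_eq_transpose_of_trivial]
      exact h4
    have := sub_eq_zero.mp h5
    exact this.symm
  have hU₁r : Eᵀ * (Ld * (E * U₁)) = 0 := by
    simpa only [Matrix.mul_assoc] using hU₁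
  have hEU₁ : E * U₁ = 0 := by
    calc E * U₁ = E * (Eᵀ * (Ld * E)) * U₁ := by rw [key]
    _ = E * (Eᵀ * (Ld * (E * U₁))) := by simp only [Matrix.mul_assoc]
    _ = 0 := by rw [hU₁r, Matrix.mul_zero]
  -- generic helper lemmas
  have hEEV : ∀ {α : Type} [Fintype α] (X : Matrix (Fin (N - 1)) α ℝ),
      E * (Eᵀ * (V₂ * X)) = V₂ * (Γ * X) := by
    intro α _ X
    rw [← Matrix.mul_assoc Eᵀ V₂ X, ← Matrix.mul_assoc E (Eᵀ * V₂) X, hLV₂r,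
      Matrix.mul_assoc]
  have hV₂X : ∀ {α : Type} [Fintype α] (X : Matrix (Fin (N - 1)) α ℝ),
      V₂ᵀ * (V₂ * X) = X := by
    intro α _ X
    rw [← Matrix.mul_assoc, hV₂, Matrix.one_mul]
  have hU₁tX : ∀ {α : Type} [Fintype α] (X : Matrix (Fin N) α ℝ),
      U₁ᵀ * (Eᵀ * X) = 0 := by
    intro α _ X
    rw [← Matrix.mul_assoc, show U₁ᵀ * Eᵀ = (E * U₁)ᵀ from (transpose_mul E U₁).symm,
      hEU₁, transpose_zero, Matrix.zero_mul]
  have hSsym : Sᵀ = S := by rw [hS, Matrix.diagonal_transpose]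
  have hSΓΓS : S * (Γ * (Γ * S)) = Γ := by
    rw [hS, hΓ, Matrix.diagonal_mul_diagonal, Matrix.diagonal_mul_diagonal,
      Matrix.diagonal_mul_diagonal]
    have hfun : (fun k => (Real.sqrt (γ k))⁻¹ * (γ k * (γ k * (Real.sqrt (γ k))⁻¹))) = γ := by
      funext k
      have h1 : Real.sqrt (γ k) ≠ 0 := ne_of_gt (Real.sqrt_pos.mpr (hγ k))
      have h2 : Real.sqrt (γ k) * Real.sqrt (γ k) = γ k := Real.mul_self_sqrt (hγ k).le
      rw [← h2]
      field_simp
      rw [Real.sqrt_sq (Real.sqrt_nonneg _)]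
    rw [hfun]
  -- second conjunct
  have hsecond : F = Uᵀ * (Eᵀ * E) * U := by
    have b11 : U₁ᵀ * (Eᵀ * (E * U₁)) = 0 := by
      rw [hEU₁, Matrix.mul_zero, Matrix.mul_zero]
    have b12 : U₁ᵀ * (Eᵀ * (E * (Eᵀ * (V₂ * S)))) = 0 := hU₁tX _
    have b21 : S * (V₂ᵀ * (Eᵀᵀ * (Eᵀ * (E * U₁)))) = 0 := by
      rw [hEU₁]
      simp
    have b22 : S * (V₂ᵀ * (Eᵀᵀ * (Eᵀ * (E * (Eᵀ * (V₂ * S)))))) = Γ := by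
      calc S * (V₂ᵀ * (Eᵀᵀ * (Eᵀ * (E * (Eᵀ * (V₂ * S))))))
          = S * (V₂ᵀ * (E * (Eᵀ * (E * (Eᵀ * (V₂ * S)))))) := by
            rw [transpose_transpose]
        _ = S * (V₂ᵀ * (E * (Eᵀ * (V₂ * (Γ * S))))) := by rw [hEEV]
        _ = S * (V₂ᵀ * (V₂ * (Γ * (Γ * S)))) := by rw [hEEV]
        _ = S * (Γ * (Γ * S)) := by rw [hV₂X]
        _ = Γ := hSΓΓS
    simp only [hU, hF, transpose_fromCols, mul_fromCols, fromRows_mul,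
      fromCols_fromRows_eq_fromBlocks, transpose_mul, hSsym, Matrix.mul_assoc]
    rw [b11, b12, b21, b22]
  refine ⟨?_, hsecond⟩
  calc U * F * Uᵀ = U * (Uᵀ * (Eᵀ * E) * U) * Uᵀ := by rw [← hsecond]
    _ = (U * Uᵀ) * (Eᵀ * E) * (U * Uᵀ) := by simp only [Matrix.mul_assoc]
    _ = Eᵀ * E := by rw [hUorth', Matrix.one_mul, Matrix.mul_one]
end

section
/- Let P ≻ 0 and ε > 0, and suppose that the block matrix [[P̃Ã + ÃᵀP̃ + εP̃ − I_{N−1} ⊗ (Ψσ₁σ₂), P̃B̃ + ½U₂ᵀ ⊗ (Ψ(σ₁+σ₂))], [(·)ᵀ, −I_M ⊗ Ψ]] ⪯ 0, where P̃ = I_{N−1} ⊗ P, Ã = I_{N−1} ⊗ A, B̃ = (Γ·U₂ᵀ) ⊗ (BK). Then along any trajectory of the Lur'e network ż̃₂ = Ãz̃₂ + B̃v, z = (U₂ ⊗ I_n)z̃₂, v = Φ(z) with Φ satisfying the componentwise sector condition with bounds σ₁ < σ₂, the Lyapunov function V(z̃₂) = z̃₂ᵀP̃z̃₂ satisfies V̇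 + εV ≤ 0, and hence V(z̃₂(t)) ≤ e^{−εt}V(z̃₂(0)), so z̃₂(t) → 0 exponentially. -/
open Matrix Kronecker Filter

lemma dpT {ι κ : Type*} [Fintype ι] [Fintype κ] (X : Matrix ι κ ℝ) (a : κ → ℝ) (b : ι → ℝ) :
    (X *ᵥ a) ⬝ᵥ b = a ⬝ᵥ (Xᵀ *ᵥ b) := by
  rw [Matrix.dotProduct_mulVec, Matrix.vecMul_transpose]

lemma hasDerivAt_quad {ι : Type*} [Fintype ι] (Q : Matrix ι ι ℝ)
    (x : ℝ → ι → ℝ) (d : ι → ℝ) (t : ℝ) (hx : HasDerivAt x d t) :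
    HasDerivAt (fun s => x s ⬝ᵥ (Q *ᵥ x s)) (d ⬝ᵥ (Q *ᵥ x t) + x t ⬝ᵥ (Q *ᵥ d)) t := by
  have hxi : ∀ i, HasDerivAt (fun s => x s i) (d i) t := fun i => hasDerivAt_pi.mp hx i
  have h : ∀ i ∈ Finset.univ, HasDerivAt (fun s => x s i * ∑ j, Q i j * x s j)
      (d i * (∑ j, Q i j * x t j) + x t i * (∑ j, Q i j * d j)) t := by
    intro i _
    exact (hxi i).mul (HasDerivAt.fun_sum fun j _ => (hxi j).const_mul (Q i j))
  have := HasDerivAt.fun_sum h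
  simp only [dotProduct, mulVec] at *
  refine this.congr_deriv ?_
  rw [Finset.sum_add_distrib]

lemma quad_smul {ι : Type*} [Fintype ι] (Q : Matrix ι ι ℝ) (a : ℝ) (x : ι → ℝ) :
    (a • x) ⬝ᵥ (Q *ᵥ (a • x)) = a^2 * (x ⬝ᵥ (Q *ᵥ x)) := by
  rw [Matrix.mulVec_smul, smul_dotProduct, dotProduct_smul]
  simp [smul_eq_mul]; ring

lemma quad_coercive {ι : Type*} [Fintype ι] [Nonempty ι] (Q : Matrix ι ι ℝ)
    (hpos : ∀ x : ι → ℝ, x ≠ 0 → 0 < x ⬝ᵥ (Q *ᵥ x)) :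
    ∃ c > 0, ∀ x : ι → ℝ, c * ‖x‖^2 ≤ x ⬝ᵥ (Q *ᵥ x) := by
  have hcont : Continuous fun x : ι → ℝ => x ⬝ᵥ (Q *ᵥ x) := by
    simp only [dotProduct, mulVec]
    exact continuous_finset_sum _ fun i _ =>
      (continuous_apply i).mul (continuous_finset_sum _ fun j _ =>
        continuous_const.mul (continuous_apply j))
  have hsph : (Metric.sphere (0 : ι → ℝ) 1).Nonempty :=
    NormedSpace.sphere_nonempty.mpr zero_le_one
  obtain ⟨x₀, hx₀mem, hx₀min⟩ :=
    (isCompact_sphere (0 : ι → ℝ) 1).exists_isMinOn hsph hcont.continuousOn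
  have hx₀norm : ‖x₀‖ = 1 := by simpa using hx₀mem
  have hx₀ne : x₀ ≠ 0 := fun h => by simp [h] at hx₀norm
  refine ⟨x₀ ⬝ᵥ (Q *ᵥ x₀), hpos x₀ hx₀ne, fun x => ?_⟩
  rcases eq_or_ne x 0 with rfl | hx
  · simp
  · have hn : (0:ℝ) < ‖x‖ := norm_pos_iff.mpr hx
    have hu : (‖x‖⁻¹ • x) ∈ Metric.sphere (0 : ι → ℝ) 1 := by
      simp [norm_smul, abs_of_pos (inv_pos.mpr hn), inv_mul_cancel₀ hn.ne']
    have h2 : x₀ ⬝ᵥ (Q *ᵥ x₀) ≤ (‖x‖⁻¹)^2 * (x ⬝ᵥ (Q *ᵥ x)) := by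
      have h3 := hx₀min hu
      simp only [Set.mem_setOf_eq] at h3
      rwa [quad_smul] at h3
    calc (x₀ ⬝ᵥ (Q *ᵥ x₀)) * ‖x‖^2 ≤ ((‖x‖⁻¹)^2 * (x ⬝ᵥ (Q *ᵥ x))) * ‖x‖^2 := by
          apply mul_le_mul_of_nonneg_right h2 (by positivity)
      _ = x ⬝ᵥ (Q *ᵥ x) := by field_simp

lemma kron_one_quad {ι κ : Type*} [Fintype ι] [Fintype κ] [DecidableEq ι]
    (P : Matrix κ κ ℝ) (x : ι × κ → ℝ) :
    x ⬝ᵥ (((1 : Matrix ι ι ℝ) ⊗ₖ P) *ᵥ x)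
      = ∑ i : ι, (fun k => x (i,k)) ⬝ᵥ (P *ᵥ fun k => x (i,k)) := by
  simp only [dotProduct, mulVec, Matrix.kroneckerMap_apply, Matrix.one_apply,
    Fintype.sum_prod_type, ite_mul, one_mul, zero_mul, mul_ite, mul_zero]
  refine Finset.sum_congr rfl fun i _ => Finset.sum_congr rfl fun k _ => ?_
  congr 1
  rw [Finset.sum_comm]
  simp [Finset.sum_ite_eq]

lemma dpT' {ι κ : Type*} [Fintype ι] [Fintype κ] (X : Matrix ι κ ℝ) (a : ι → ℝ) (b : κ → ℝ) :
    a ⬝ᵥ (X *ᵥ b) = b ⬝ᵥ (Xᵀ *ᵥ a) := by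
  rw [← dpT, dotProduct_comm]

/-- If the LMI block matrix built from `P ≻ 0`, `ε > 0` is negative semidefinite,
then along any trajectory of the Lur'e network `ż̃₂ = Ãz̃₂ + B̃v`, `z = (U₂ ⊗ I_n)z̃₂`,
`v = Φ(z)` with componentwise sector-bounded `Φ`, the Lyapunov function
`V(z̃₂) = z̃₂ᵀP̃z̃₂` satisfies `V̇ + εV ≤ 0`, hence `V(z̃₂(t)) ≤ e^{−εt}V(z̃₂(0))` and
`z̃₂(t) → 0` exponentially. -/
theorem lure_network_exponential_stability
    (n m ν M : ℕ)
    (A : Matrix (Fin n) (Fin n) ℝ) (B : Matrix (Fin n) (Fin m) ℝ)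
    (K : Matrix (Fin m) (Fin n) ℝ)
    (γ : Fin ν → ℝ) (hγ : ∀ k, 0 < γ k)
    (U₂ : Matrix (Fin M) (Fin ν) ℝ) (hU₂ : U₂ᵀ * U₂ = 1)
    (ψ : Fin n → ℝ) (hψ : ∀ k, 0 < ψ k)
    (σ₁ σ₂ : ℝ) (hσ : σ₁ < σ₂)
    (P : Matrix (Fin n) (Fin n) ℝ) (hP : P.PosDef)
    (ε : ℝ) (hε : 0 < ε)
    -- abbreviations
    (Pt : Matrix (Fin ν × Fin n) (Fin ν × Fin n) ℝ)
    (hPt : Pt = (1 : Matrix (Fin ν) (Fin ν) ℝ) ⊗ₖ P)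
    (At : Matrix (Fin ν × Fin n) (Fin ν × Fin n) ℝ)
    (hAt : At = (1 : Matrix (Fin ν) (Fin ν) ℝ) ⊗ₖ A)
    (Bt : Matrix (Fin ν × Fin n) (Fin M × Fin n) ℝ)
    (hBt : Bt = (Matrix.diagonal γ * U₂ᵀ) ⊗ₖ (B * K))
    -- the LMI: the block matrix is negative semidefinite
    (hLMI : (-(Matrix.fromBlocks
        (Pt * At + Atᵀ * Pt + ε • Pt
          - (1 : Matrix (Fin ν) (Fin ν) ℝ) ⊗ₖ ((σ₁ * σ₂) • Matrix.diagonal ψ))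
        (Pt * Bt + (2⁻¹ : ℝ) • (U₂ᵀ ⊗ₖ ((σ₁ + σ₂) • Matrix.diagonal ψ)))
        (Pt * Bt + (2⁻¹ : ℝ) • (U₂ᵀ ⊗ₖ ((σ₁ + σ₂) • Matrix.diagonal ψ)))ᵀ
        (-((1 : Matrix (Fin M) (Fin M) ℝ) ⊗ₖ Matrix.diagonal ψ)))).PosSemidef)
    -- componentwise sector-bounded nonlinearity
    (φ : Fin M → Fin n → ℝ → ℝ)
    (hsector : ∀ (j : Fin M) (k : Fin n) (s : ℝ),
      (φ j k s - σ₁ * s) * (φ j k s - σ₂ * s) ≤ 0)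
    (Φ : (Fin M × Fin n → ℝ) → (Fin M × Fin n → ℝ))
    (hΦ : ∀ (z : Fin M × Fin n → ℝ) (jk : Fin M × Fin n),
      Φ z jk = φ jk.1 jk.2 (z jk))
    -- trajectory of the Lur'e network
    (z2 : ℝ → Fin ν × Fin n → ℝ)
    (v : ℝ → Fin M × Fin n → ℝ)
    (hv : ∀ t, v t = Φ ((U₂ ⊗ₖ (1 : Matrix (Fin n) (Fin n) ℝ)) *ᵥ z2 t))
    (hdyn : ∀ t, HasDerivAt z2 (At *ᵥ z2 t + Bt *ᵥ v t) t)
    (V : ℝ → ℝ) (hV : ∀ t, V t = z2 t ⬝ᵥ (Pt *ᵥ z2 t)) :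
    (∀ t : ℝ, deriv V t + ε * V t ≤ 0) ∧
    (∀ t : ℝ, 0 ≤ t → V t ≤ Real.exp (-ε * t) * V 0) ∧
    Tendsto z2 atTop (nhds 0) := by
  have hPsym : Pᵀ = P := by
    rw [← Matrix.conjTranspose_eq_transpose_of_trivial]; exact hP.1.eq
  have hPtT : Ptᵀ = Pt := by
    rw [hPt, ← Matrix.kroneckerMap_transpose, Matrix.transpose_one, hPsym]
  have hVfun : V = fun t => z2 t ⬝ᵥ (Pt *ᵥ z2 t) := funext hV
  have hVd : ∀ t, HasDerivAt V
      ((At *ᵥ z2 t + Bt *ᵥ v t) ⬝ᵥ (Pt *ᵥ z2 t)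
        + z2 t ⬝ᵥ (Pt *ᵥ (At *ᵥ z2 t + Bt *ᵥ v t))) t := by
    intro t; rw [hVfun]; exact hasDerivAt_quad Pt z2 _ t (hdyn t)
  -- the key differential inequality
  have hkey : ∀ t, deriv V t + ε * V t ≤ 0 := by
    intro t
    set z := z2 t with hz
    set w := v t with hw
    set Ψm := Matrix.diagonal ψ with hΨm
    set ζ := (U₂ ⊗ₖ (1 : Matrix (Fin n) (Fin n) ℝ)) *ᵥ z with hζdef
    set G := U₂ ⊗ₖ (1 : Matrix (Fin n) (Fin n) ℝ) with hG
    set TM := (1 : Matrix (Fin M) (Fin M) ℝ) ⊗ₖ Ψm with hTM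
    set M11 := Pt * At + Atᵀ * Pt + ε • Pt
          - (1 : Matrix (Fin ν) (Fin ν) ℝ) ⊗ₖ ((σ₁ * σ₂) • Ψm) with hM11
    set M12 := Pt * Bt + (2⁻¹ : ℝ) • (U₂ᵀ ⊗ₖ ((σ₁ + σ₂) • Ψm)) with hM12
    -- LMI applied to the stacked vector
    have hE0 := hLMI.dotProduct_mulVec_nonneg (Sum.elim z w)
    rw [star_trivial, Matrix.neg_mulVec, dotProduct_neg, Matrix.fromBlocks_mulVec,
      sumElim_dotProduct_sumElim] at hE0
    simp only [Sum.elim_comp_inl, Sum.elim_comp_inr] at hE0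
    have hE : z ⬝ᵥ (M11 *ᵥ z) + z ⬝ᵥ (M12 *ᵥ w)
        + (w ⬝ᵥ (M12ᵀ *ᵥ z) + w ⬝ᵥ ((-TM) *ᵥ w)) ≤ 0 := by
      have := neg_nonneg.mp (by linarith [hE0] : 0 ≤ -(z ⬝ᵥ (M11 *ᵥ z + M12 *ᵥ w)
          + w ⬝ᵥ (M12ᵀ *ᵥ z + (-TM) *ᵥ w)))
      calc z ⬝ᵥ (M11 *ᵥ z) + z ⬝ᵥ (M12 *ᵥ w) + (w ⬝ᵥ (M12ᵀ *ᵥ z) + w ⬝ᵥ ((-TM) *ᵥ w))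
          = z ⬝ᵥ (M11 *ᵥ z + M12 *ᵥ w) + w ⬝ᵥ (M12ᵀ *ᵥ z + (-TM) *ᵥ w) := by
            rw [dotProduct_add, dotProduct_add]
        _ ≤ 0 := this
    -- scalar abbreviations
    have hsymm12 : w ⬝ᵥ (M12ᵀ *ᵥ z) = z ⬝ᵥ (M12 *ᵥ w) := (dpT' M12 z w).symm
    have h1 : z ⬝ᵥ (M11 *ᵥ z)
        = z ⬝ᵥ ((Pt * At) *ᵥ z) + z ⬝ᵥ ((Atᵀ * Pt) *ᵥ z) + ε * (z ⬝ᵥ (Pt *ᵥ z))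
          - σ₁ * σ₂ * (z ⬝ᵥ (((1 : Matrix (Fin ν) (Fin ν) ℝ) ⊗ₖ Ψm) *ᵥ z)) := by
      rw [hM11, Matrix.kronecker_smul, Matrix.sub_mulVec, Matrix.add_mulVec, Matrix.add_mulVec,
        Matrix.smul_mulVec, Matrix.smul_mulVec, dotProduct_sub, dotProduct_add,
        dotProduct_add, dotProduct_smul, dotProduct_smul]
      simp [smul_eq_mul]
    have h2 : z ⬝ᵥ (M12 *ᵥ w)
        = z ⬝ᵥ ((Pt * Bt) *ᵥ w)
          + 2⁻¹ * (σ₁ + σ₂) * (z ⬝ᵥ ((U₂ᵀ ⊗ₖ Ψm) *ᵥ w)) := by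
      rw [hM12, Matrix.kronecker_smul, smul_smul, Matrix.add_mulVec, Matrix.smul_mulVec,
        dotProduct_add, dotProduct_smul]
      simp [smul_eq_mul]
    have h3 : w ⬝ᵥ ((-TM) *ᵥ w) = -(w ⬝ᵥ (TM *ᵥ w)) := by
      rw [Matrix.neg_mulVec, dotProduct_neg]
    -- derivative expression
    have h4 : deriv V t + ε * V t
        = z ⬝ᵥ ((Atᵀ * Pt) *ᵥ z) + z ⬝ᵥ ((Pt * At) *ᵥ z)
          + 2 * (z ⬝ᵥ ((Pt * Bt) *ᵥ w)) + ε * (z ⬝ᵥ (Pt *ᵥ z)) := by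
      rw [(hVd t).deriv, hV t, ← hz, ← hw]
      have e1 : (At *ᵥ z) ⬝ᵥ (Pt *ᵥ z) = z ⬝ᵥ ((Atᵀ * Pt) *ᵥ z) := by
        rw [dpT, Matrix.mulVec_mulVec]
      have e2 : (Bt *ᵥ w) ⬝ᵥ (Pt *ᵥ z) = z ⬝ᵥ ((Pt * Bt) *ᵥ w) := by
        rw [dpT, Matrix.mulVec_mulVec, dpT', Matrix.transpose_mul, hPtT, Matrix.transpose_transpose]
      have e3 : z ⬝ᵥ (Pt *ᵥ (At *ᵥ z)) = z ⬝ᵥ ((Pt * At) *ᵥ z) := by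
        rw [Matrix.mulVec_mulVec]
      have e4 : z ⬝ᵥ (Pt *ᵥ (Bt *ᵥ w)) = z ⬝ᵥ ((Pt * Bt) *ᵥ w) := by
        rw [Matrix.mulVec_mulVec]
      rw [add_dotProduct, Matrix.mulVec_add, dotProduct_add, e1, e2, e3, e4]
      ring
    -- Kronecker identities for the sector terms
    have hGT : Gᵀ = U₂ᵀ ⊗ₖ (1 : Matrix (Fin n) (Fin n) ℝ) := by
      rw [hG, ← Matrix.kroneckerMap_transpose, Matrix.transpose_one]
    have hGTM : Gᵀ * TM = U₂ᵀ ⊗ₖ Ψm := by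
      rw [hGT, hTM, ← Matrix.mul_kronecker_mul, Matrix.mul_one, Matrix.one_mul]
    have hGTMG : Gᵀ * TM * G = (1 : Matrix (Fin ν) (Fin ν) ℝ) ⊗ₖ Ψm := by
      rw [hGTM, hG, ← Matrix.mul_kronecker_mul, hU₂, Matrix.mul_one]
    have h5 : z ⬝ᵥ (((1 : Matrix (Fin ν) (Fin ν) ℝ) ⊗ₖ Ψm) *ᵥ z) = ζ ⬝ᵥ (TM *ᵥ ζ) := by
      rw [hζdef, dpT, Matrix.mulVec_mulVec, Matrix.mulVec_mulVec, hGTMG]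
    have h6 : z ⬝ᵥ ((U₂ᵀ ⊗ₖ Ψm) *ᵥ w) = ζ ⬝ᵥ (TM *ᵥ w) := by
      rw [hζdef, dpT, Matrix.mulVec_mulVec, hGTM]
    -- the weighted sector inequality
    have h7 : w ⬝ᵥ (TM *ᵥ w) - (σ₁ + σ₂) * (ζ ⬝ᵥ (TM *ᵥ w))
        + σ₁ * σ₂ * (ζ ⬝ᵥ (TM *ᵥ ζ)) ≤ 0 := by
      have hTMdiag : TM = Matrix.diagonal (fun jk : Fin M × Fin n => ψ jk.2) := by
        rw [hTM, hΨm, ← Matrix.diagonal_one, Matrix.diagonal_kronecker_diagonal]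
        simp
      have hwφ : ∀ jk : Fin M × Fin n, w jk = φ jk.1 jk.2 (ζ jk) := by
        intro jk; rw [hw, hv t, hΦ]
      have hcomb : w ⬝ᵥ (TM *ᵥ w) - (σ₁ + σ₂) * (ζ ⬝ᵥ (TM *ᵥ w))
          + σ₁ * σ₂ * (ζ ⬝ᵥ (TM *ᵥ ζ))
          = ∑ jk : Fin M × Fin n,
              ψ jk.2 * ((w jk - σ₁ * ζ jk) * (w jk - σ₂ * ζ jk)) := by
        rw [hTMdiag]
        simp only [dotProduct, Matrix.mulVec_diagonal, Finset.mul_sum]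
        rw [← Finset.sum_sub_distrib, ← Finset.sum_add_distrib]
        exact Finset.sum_congr rfl fun jk _ => by ring
      rw [hcomb]
      apply Finset.sum_nonpos
      intro jk _
      have := hsector jk.1 jk.2 (ζ jk)
      rw [← hwφ jk] at this
      exact mul_nonpos_iff.mpr (Or.inl ⟨(hψ jk.2).le, this⟩)
    rw [h5] at h1
    rw [h6] at h2
    linarith [hE, h1, h2, h3, h4, h7, hsymm12]
  -- Grönwall
  have hgron : ∀ t : ℝ, 0 ≤ t → V t ≤ Real.exp (-ε * t) * V 0 := by
    have hg : ∀ t, HasDerivAt (fun s => Real.exp (ε * s) * V s)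
        (Real.exp (ε * t) * (deriv V t + ε * V t)) t := by
      intro t
      have h1 : HasDerivAt (fun s : ℝ => Real.exp (ε * s)) (ε * Real.exp (ε * t)) t := by
        simpa [mul_comm, Function.comp_def] using
          (Real.hasDerivAt_exp (ε * t)).comp t ((hasDerivAt_id t).const_mul ε)
      have hVt : HasDerivAt V (deriv V t) t := by
        rw [(hVd t).deriv]; exact hVd t
      have := h1.mul hVt
      refine this.congr_deriv ?_
      ring
    have hanti : Antitone fun s => Real.exp (ε * s) * V s := by
      apply antitone_of_deriv_nonpos
      · exact fun t => (hg t).differentiableAt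
      · intro t
        rw [(hg t).deriv]
        exact mul_nonpos_of_nonneg_of_nonpos (Real.exp_nonneg _) (hkey t)
    intro t ht
    have h0 : Real.exp (ε * t) * V t ≤ V 0 := by simpa using hanti ht
    calc V t = Real.exp (-ε * t) * (Real.exp (ε * t) * V t) := by
          rw [← mul_assoc, ← Real.exp_add]; simp
      _ ≤ Real.exp (-ε * t) * V 0 :=
          mul_le_mul_of_nonneg_left h0 (Real.exp_nonneg _)
  refine ⟨hkey, hgron, ?_⟩
  -- convergence to zero
  rcases isEmpty_or_nonempty (Fin ν × Fin n) with hemp | hne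
  · have : z2 = fun _ => 0 := funext fun t => funext fun i => hemp.elim i
    rw [this]
    simpa using (tendsto_const_nhds : Tendsto (fun _ : ℝ => (0 : Fin ν × Fin n → ℝ)) atTop _)
  · have hPt_pos : ∀ x : Fin ν × Fin n → ℝ, x ≠ 0 → 0 < x ⬝ᵥ (Pt *ᵥ x) := by
      intro x hx
      rw [hPt, kron_one_quad]
      obtain ⟨ik, hik⟩ : ∃ ik, x ik ≠ 0 := by
        by_contra h; push_neg at h; exact hx (funext h)
      have hrow : (fun k => x (ik.1, k)) ≠ 0 := by
        intro h
        exact hik (by simpa using congrFun h ik.2)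
      apply Finset.sum_pos'
      · intro i _
        simpa using hP.posSemidef.dotProduct_mulVec_nonneg (fun k => x (i, k))
      · exact ⟨ik.1, Finset.mem_univ _, by simpa using hP.dotProduct_mulVec_pos hrow⟩
    obtain ⟨c, hc, hcoer⟩ := quad_coercive Pt hPt_pos
    rw [tendsto_zero_iff_norm_tendsto_zero]
    have hgt : Tendsto (fun t : ℝ => Real.sqrt (V 0 / c * Real.exp (-ε * t)))
        atTop (nhds 0) := by
      have h1 : Tendsto (fun t : ℝ => ε * t) atTop atTop :=
        Tendsto.const_mul_atTop hε tendsto_id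
      have h2 : Tendsto (fun t : ℝ => Real.exp (-ε * t)) atTop (nhds 0) := by
        have := (Real.tendsto_exp_atTop.comp h1).inv_tendsto_atTop
        refine this.congr fun t => ?_
        simp [Real.exp_neg, neg_mul]
      have h3 : Tendsto (fun t : ℝ => V 0 / c * Real.exp (-ε * t)) atTop (nhds 0) := by
        simpa using h2.const_mul (V 0 / c)
      have := (Real.continuous_sqrt.tendsto 0).comp h3
      simpa [Function.comp_def] using this
    apply squeeze_zero' (Eventually.of_forall fun t => norm_nonneg _) ?_ hgt
    filter_upwards [eventually_ge_atTop (0 : ℝ)] with t ht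
    have hb : c * ‖z2 t‖ ^ 2 ≤ Real.exp (-ε * t) * V 0 := by
      calc c * ‖z2 t‖ ^ 2 ≤ z2 t ⬝ᵥ (Pt *ᵥ z2 t) := hcoer _
        _ = V t := (hV t).symm
        _ ≤ Real.exp (-ε * t) * V 0 := hgron t ht
    have hb2 : ‖z2 t‖ ^ 2 ≤ V 0 / c * Real.exp (-ε * t) := by
      rw [div_mul_eq_mul_div, le_div_iff₀ hc]
      nlinarith
    calc ‖z2 t‖ = Real.sqrt (‖z2 t‖ ^ 2) := (Real.sqrt_sq (norm_nonneg _)).symm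
      _ ≤ Real.sqrt (V 0 / c * Real.exp (-ε * t)) := Real.sqrt_le_sqrt hb2
end
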